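/- Let P = v_1, …, v_n (n ≥ 3) be a path with nonnegative edge lengths, nonnegative vertex weights w_i and nonnegative values z_i, and let Z = Σ_{i=1}^n z_i. Fix 2 ≤ j ≤ n−1 and set u = v_j, e_1 = (v_{j−1}, v_j), e_2 = (v_j, v_{j+1}). If Σ_{i=1}^{j−1} z_i ≥ Z/2, then f^{e_1}(v_1,v_n) − f^{e_2}(v_1,v_n) = λ w_j (d(v_j,v_1) − d(v_j,v_n)) + 2(1−λ) z_j. -/

import Mathlib

private lemma split_left (g : ℕ → ℝ) (a b : ℕ) (h : a ≤ b) :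
    ∑ i ∈ Finset.Icc a b, g i = g a + ∑ i ∈ Finset.Icc (a + 1) b, g i := by
  rw [Finset.Icc_eq_cons_Ioc h, Finset.sum_cons, Finset.Icc_add_one_left_eq_Ioc]

private lemma split_right (g : ℕ → ℝ) (a b : ℕ) (h : a ≤ b + 1) :
    ∑ i ∈ Finset.Icc a (b + 1), g i = (∑ i ∈ Finset.Icc a b, g i) + g (b + 1) :=
  Finset.sum_Icc_succ_top h g

/-- Let `P = v_1, …, v_n` (`n ≥ 3`) be a path with nonnegative edge lengths
(`L i` is the length of the edge `(v_i, v_{i+1})`), nonnegative weights `w` and values `z`,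
and `d i k = ∑_{m=min i k}^{max i k - 1} L m` the distance between `v_i` and `v_k`.
For a deleted edge `(v_m, v_{m+1})`, the balanced 2-maxian objective at facilities `v_1, v_n`
is `f m = λ(∑_{i=m+1}^{n} w_i d(v_i,v_1) + ∑_{i=1}^{m} w_i d(v_i,v_n))
          − (1−λ)|∑_{i=m+1}^{n} z_i − ∑_{i=1}^{m} z_i|`.
Fix `2 ≤ j ≤ n−1`, `e_1 = (v_{j−1},v_j)`, `e_2 = (v_j,v_{j+1})`. If `∑_{i=1}^{j−1} z_i ≥ Z/2`,
then `f^{e_1} − f^{e_2} = λ w_j (d(v_j,v_1) − d(v_j,v_n)) + 2(1−λ) z_j`. -/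
theorem objective_difference_adjacent_edges_above_half
    (n : ℕ) (hn : 3 ≤ n) (L w z : ℕ → ℝ)
    (hL : ∀ i, 0 ≤ L i) (hw : ∀ i, 0 ≤ w i) (hz : ∀ i, 0 ≤ z i)
    (lam : ℝ) (hlam : lam ∈ Set.Icc (0 : ℝ) 1)
    (d : ℕ → ℕ → ℝ) (hd : ∀ i k, d i k = ∑ m ∈ Finset.Ico (min i k) (max i k), L m)
    (f : ℕ → ℝ)
    (hf : ∀ m, f m =
      lam * ((∑ i ∈ Finset.Icc (m + 1) n, w i * d i 1) + ∑ i ∈ Finset.Icc 1 m, w i * d i n) -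
        (1 - lam) * |(∑ i ∈ Finset.Icc (m + 1) n, z i) - ∑ i ∈ Finset.Icc 1 m, z i|)
    (j : ℕ) (hj2 : 2 ≤ j) (hjn : j ≤ n - 1)
    (hhalf : (∑ i ∈ Finset.Icc 1 n, z i) / 2 ≤ ∑ i ∈ Finset.Icc 1 (j - 1), z i) :
    f (j - 1) - f j = lam * w j * (d j 1 - d j n) + 2 * (1 - lam) * z j := by
  have h1 : j - 1 + 1 = j := by omega
  have hjn' : j ≤ n := by omega
  rw [hf, hf, h1]
  -- split the sums
  have sw1 : ∑ i ∈ Finset.Icc j n, w i * d i 1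
      = w j * d j 1 + ∑ i ∈ Finset.Icc (j + 1) n, w i * d i 1 :=
    split_left _ j n hjn'
  have sw2 : ∑ i ∈ Finset.Icc 1 j, w i * d i n
      = (∑ i ∈ Finset.Icc 1 (j - 1), w i * d i n) + w j * d j n := by
    have := split_right (fun i => w i * d i n) 1 (j - 1) (by omega)
    rwa [h1] at this
  have sz1 : ∑ i ∈ Finset.Icc j n, z i
      = z j + ∑ i ∈ Finset.Icc (j + 1) n, z i := split_left _ j n hjn'
  have sz2 : ∑ i ∈ Finset.Icc 1 j, z i
      = (∑ i ∈ Finset.Icc 1 (j - 1), z i) + z j := by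
    have := split_right z 1 (j - 1) (by omega)
    rwa [h1] at this
  have sZ : ∑ i ∈ Finset.Icc 1 n, z i
      = (∑ i ∈ Finset.Icc 1 (j - 1), z i) + (z j + ∑ i ∈ Finset.Icc (j + 1) n, z i) := by
    rw [← sz1]
    rw [← Finset.Ico_add_one_right_eq_Icc 1 n, ← Finset.Ico_add_one_right_eq_Icc 1 (j - 1), ← Finset.Ico_add_one_right_eq_Icc j n, (show j - 1 + 1 = j by omega),
      ← Finset.sum_Ico_consecutive (fun i => z i) (by omega : 1 ≤ j) (by omega : j ≤ n + 1)]
  set S1 := ∑ i ∈ Finset.Icc (j + 1) n, z i with hS1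
  set S2 := ∑ i ∈ Finset.Icc 1 (j - 1), z i with hS2
  have hA : z j + S1 - S2 ≤ 0 := by
    rw [sZ] at hhalf; linarith
  have hB : S1 - (S2 + z j) ≤ 0 := by
    have := hz j; linarith
  rw [sw1, sw2, sz1, sz2, abs_of_nonpos hA, abs_of_nonpos hB]
  ring
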